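/- Let 0 < l < 1, let φ(ξ) = l·ξ·|ξ| − ξ³ be the phase function of the generalized Benjamin equation, and let ρ > 1/4. Then there exists a constant C > 0 such that for every τ ∈ ℝ, ∫_ℝ ξ² / (1 + |τ − φ(ξ)|)^{4ρ} dξ ≤ C. -/

import Mathlib

open MeasureTheory ENNReal Set

/-- The phase function of the generalized Benjamin equation: φ(ξ) = l·ξ·|ξ| − ξ³. -/
noncomputable def benjaminPhase (l : ℝ) (ξ : ℝ) : ℝ := l * ξ * |ξ| - ξ ^ 3

section aux

/-- 1D change of variables for the Lebesgue (lower) integral. -/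
theorem lintegral_image_eq_lintegral_abs_deriv_mul' {s : Set ℝ} {f f' : ℝ → ℝ}
    (hs : MeasurableSet s) (hf' : ∀ x ∈ s, HasDerivWithinAt f (f' x) s x)
    (hf : Set.InjOn f s) (g : ℝ → ℝ≥0∞) :
    ∫⁻ x in f '' s, g x = ∫⁻ x in s, ENNReal.ofReal |f' x| * g (f x) := by
  simpa only [ContinuousLinearMap.det_toSpanSingleton] using
    MeasureTheory.lintegral_image_eq_lintegral_abs_det_fderiv_mul volume hs
      (fun x hx => (hf' x hx).hasFDerivWithinAt) hf g

theorem benjaminPhase_continuous (l : ℝ) : Continuous (benjaminPhase l) := by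
  unfold benjaminPhase
  continuity

theorem benjaminPhase_hasDerivAt_pos (l : ℝ) {ξ : ℝ} (hξ : 0 < ξ) :
    HasDerivAt (benjaminPhase l) (2 * l * ξ - 3 * ξ ^ 2) ξ := by
  have h : HasDerivAt (fun x : ℝ => l * x ^ 2 - x ^ 3) (2 * l * ξ - 3 * ξ ^ 2) ξ := by
    have h1 := ((hasDerivAt_pow 2 ξ).const_mul l).sub (hasDerivAt_pow 3 ξ)
    refine h1.congr_deriv ?_
    push_cast
    ring
  apply h.congr_of_eventuallyEq
  filter_upwards [eventually_gt_nhds hξ] with x hx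
  simp [benjaminPhase, abs_of_pos hx]
  ring

theorem benjaminPhase_hasDerivAt_neg (l : ℝ) {ξ : ℝ} (hξ : ξ < 0) :
    HasDerivAt (benjaminPhase l) (-(2 * l * ξ) - 3 * ξ ^ 2) ξ := by
  have h : HasDerivAt (fun x : ℝ => -(l * x ^ 2) - x ^ 3) (-(2 * l * ξ) - 3 * ξ ^ 2) ξ := by
    have h1 := (((hasDerivAt_pow 2 ξ).const_mul l).neg).sub (hasDerivAt_pow 3 ξ)
    refine h1.congr_deriv ?_
    push_cast
    ring
  apply h.congr_of_eventuallyEq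
  filter_upwards [eventually_lt_nhds hξ] with x hx
  have : |x| = -x := abs_of_neg hx
  simp only [benjaminPhase, this]
  ring

end aux

/-- Key step of Lemma 4.1: for 0 < l < 1 and ρ > 1/4 there is a constant C such that
    for every τ, ∫ ξ² / (1 + |τ − φ(ξ)|)^{4ρ} dξ ≤ C. -/
theorem integral_sq_div_weight_bounded (l ρ : ℝ) (hl0 : 0 < l) (hl1 : l < 1)
    (hρ : 1 / 4 < ρ) :
    ∃ C : ℝ, 0 < C ∧ ∀ τ : ℝ,
      (∫⁻ ξ : ℝ, ENNReal.ofReal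
          (ξ ^ 2 / (1 + |τ - benjaminPhase l ξ|) ^ (4 * ρ)))
        ≤ ENNReal.ofReal C := by
  set r : ℝ := 4 * ρ with hr_def
  have hr : 1 < r := by simp only [hr_def]; linarith
  have hr0 : 0 ≤ r := by linarith
  -- the Japanese bracket integral
  have hI : Integrable (fun x : ℝ => (1 + ‖x‖) ^ (-r)) (volume : Measure ℝ) := by
    apply integrable_one_add_norm
    simp only [Module.finrank_self]
    exact_mod_cast hr
  set I : ℝ := ∫ x : ℝ, (1 + ‖x‖) ^ (-r) with hI_def
  have hInn : 0 ≤ I := by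
    apply integral_nonneg
    intro x
    positivity
  refine ⟨2 + 2 * I, by linarith, fun τ => ?_⟩
  -- notation
  set φ : ℝ → ℝ := benjaminPhase l with hφ_def
  set F : ℝ → ℝ≥0∞ := fun ξ => ENNReal.ofReal (ξ ^ 2 / (1 + |τ - φ ξ|) ^ r) with hF_def
  set g : ℝ → ℝ≥0∞ := fun x => ENNReal.ofReal ((1 + |τ - x|) ^ (-r)) with hg_def
  have hg_meas : Measurable g := by
    apply ENNReal.measurable_ofReal.comp
    fun_prop
  -- the full g-integral equals ofReal I
  have hg_int : ∫⁻ x : ℝ, g x = ENNReal.ofReal I := by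
    have hmp : MeasurePreserving (fun x : ℝ => τ - x) volume volume := by
      have h := (measurePreserving_add_left (volume : Measure ℝ) τ).comp
        (Measure.measurePreserving_neg (volume : Measure ℝ))
      simpa [Function.comp_def, sub_eq_add_neg] using h
    have h1 : ∫⁻ x : ℝ, g x
        = ∫⁻ x : ℝ, ENNReal.ofReal ((1 + ‖x‖) ^ (-r)) := by
      have := hmp.lintegral_comp
        (f := fun y : ℝ => ENNReal.ofReal ((1 + ‖y‖) ^ (-r)))
        (by apply ENNReal.measurable_ofReal.comp; fun_prop)
      simpa [hg_def, Real.norm_eq_abs] using this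
    rw [h1, ← ofReal_integral_eq_lintegral_ofReal hI]
    filter_upwards with x
    positivity
  -- pointwise bound: F ξ ≤ ofReal (ξ^2) * g (φ ξ)
  have hF_le : ∀ ξ : ℝ, F ξ ≤ ENNReal.ofReal (ξ ^ 2) * g (φ ξ) := by
    intro ξ
    have hb : (0:ℝ) < 1 + |τ - φ ξ| := by positivity
    have : ξ ^ 2 / (1 + |τ - φ ξ|) ^ r = ξ ^ 2 * (1 + |τ - φ ξ|) ^ (-r) := by
      rw [Real.rpow_neg hb.le, div_eq_mul_inv]
    rw [hF_def]
    simp only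
    rw [this, ENNReal.ofReal_mul (by positivity)]
  -- bound on the middle interval
  have hmid : ∫⁻ ξ in Icc (-1 : ℝ) 1, F ξ ≤ ENNReal.ofReal 2 := by
    have hle : ∀ ξ ∈ Icc (-1 : ℝ) 1, F ξ ≤ 1 := by
      intro ξ hξ
      have h1 : ξ ^ 2 ≤ 1 := by
        rcases hξ with ⟨h1, h2⟩
        nlinarith
      have hb : (1:ℝ) ≤ (1 + |τ - φ ξ|) ^ r :=
        Real.one_le_rpow (le_add_of_nonneg_right (abs_nonneg _)) hr0
      have : ξ ^ 2 / (1 + |τ - φ ξ|) ^ r ≤ 1 :=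
        div_le_one_of_le₀ (le_trans (by linarith) hb) (by positivity)
      calc F ξ ≤ ENNReal.ofReal 1 := ENNReal.ofReal_le_ofReal this
        _ = 1 := ENNReal.ofReal_one
    calc ∫⁻ ξ in Icc (-1 : ℝ) 1, F ξ ≤ ∫⁻ _ in Icc (-1 : ℝ) 1, 1 :=
          setLIntegral_mono' measurableSet_Icc hle
      _ = volume (Icc (-1 : ℝ) 1) := setLIntegral_one _
      _ = ENNReal.ofReal 2 := by rw [Real.volume_Icc]; norm_num
  -- bound on the right tail
  have hright : ∫⁻ ξ in Ioi (1 : ℝ), F ξ ≤ ENNReal.ofReal I := by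
    set φ' : ℝ → ℝ := fun ξ => 2 * l * ξ - 3 * ξ ^ 2 with hφ'_def
    have hderiv : ∀ ξ ∈ Ioi (1:ℝ), HasDerivWithinAt φ (φ' ξ) (Ioi 1) ξ := fun ξ hξ =>
      (benjaminPhase_hasDerivAt_pos l (by linarith [mem_Ioi.mp hξ])).hasDerivWithinAt
    have hinj : Set.InjOn φ (Ioi 1) := by
      have hanti : StrictAntiOn φ (Ici (1:ℝ)) := by
        apply strictAntiOn_of_deriv_neg (convex_Ici 1)
          ((benjaminPhase_continuous l).continuousOn)
        intro x hx
        rw [interior_Ici] at hx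
        have hx1 : (1:ℝ) < x := hx
        have : deriv φ x = 2 * l * x - 3 * x ^ 2 :=
          (benjaminPhase_hasDerivAt_pos l (by linarith)).deriv
        rw [this]
        nlinarith
      exact (hanti.injOn).mono Ioi_subset_Ici_self
    have hsq : ∀ ξ ∈ Ioi (1:ℝ), ENNReal.ofReal (ξ ^ 2) * g (φ ξ)
        ≤ ENNReal.ofReal |φ' ξ| * g (φ ξ) := by
      intro ξ hξ
      have hξ1 : (1:ℝ) < ξ := hξ
      have habs : ξ ^ 2 ≤ |φ' ξ| := by
        have : φ' ξ ≤ -(ξ^2) := by simp only [hφ'_def]; nlinarith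
        have h2 : |φ' ξ| = -(φ' ξ) := abs_of_nonpos (by nlinarith)
        rw [h2]; linarith
      exact mul_le_mul_left (ENNReal.ofReal_le_ofReal habs) _
    calc ∫⁻ ξ in Ioi (1:ℝ), F ξ
        ≤ ∫⁻ ξ in Ioi (1:ℝ), ENNReal.ofReal |φ' ξ| * g (φ ξ) := by
          apply setLIntegral_mono' measurableSet_Ioi
          intro ξ hξ
          exact le_trans (hF_le ξ) (hsq ξ hξ)
      _ = ∫⁻ x in φ '' Ioi 1, g x :=
          (lintegral_image_eq_lintegral_abs_deriv_mul' measurableSet_Ioi hderiv hinj g).symm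
      _ ≤ ∫⁻ x : ℝ, g x := setLIntegral_le_lintegral _ _
      _ = ENNReal.ofReal I := hg_int
  -- bound on the left tail
  have hleft : ∫⁻ ξ in Iio (-1 : ℝ), F ξ ≤ ENNReal.ofReal I := by
    set φ' : ℝ → ℝ := fun ξ => -(2 * l * ξ) - 3 * ξ ^ 2 with hφ'_def
    have hderiv : ∀ ξ ∈ Iio (-1:ℝ), HasDerivWithinAt φ (φ' ξ) (Iio (-1)) ξ := fun ξ hξ =>
      (benjaminPhase_hasDerivAt_neg l (by linarith [mem_Iio.mp hξ])).hasDerivWithinAt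
    have hinj : Set.InjOn φ (Iio (-1)) := by
      have hanti : StrictAntiOn φ (Iic (-1:ℝ)) := by
        apply strictAntiOn_of_deriv_neg (convex_Iic (-1))
          ((benjaminPhase_continuous l).continuousOn)
        intro x hx
        rw [interior_Iic] at hx
        have hx1 : x < -1 := hx
        have : deriv φ x = -(2 * l * x) - 3 * x ^ 2 :=
          (benjaminPhase_hasDerivAt_neg l (by linarith)).deriv
        rw [this]
        nlinarith
      exact (hanti.injOn).mono Iio_subset_Iic_self
    have hsq : ∀ ξ ∈ Iio (-1:ℝ), ENNReal.ofReal (ξ ^ 2) * g (φ ξ)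
        ≤ ENNReal.ofReal |φ' ξ| * g (φ ξ) := by
      intro ξ hξ
      have hξ1 : ξ < -1 := hξ
      have habs : ξ ^ 2 ≤ |φ' ξ| := by
        have : φ' ξ ≤ -(ξ^2) := by simp only [hφ'_def]; nlinarith
        have h2 : |φ' ξ| = -(φ' ξ) := abs_of_nonpos (by nlinarith)
        rw [h2]; linarith
      exact mul_le_mul_left (ENNReal.ofReal_le_ofReal habs) _
    calc ∫⁻ ξ in Iio (-1:ℝ), F ξ
        ≤ ∫⁻ ξ in Iio (-1:ℝ), ENNReal.ofReal |φ' ξ| * g (φ ξ) := by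
          apply setLIntegral_mono' measurableSet_Iio
          intro ξ hξ
          exact le_trans (hF_le ξ) (hsq ξ hξ)
      _ = ∫⁻ x in φ '' Iio (-1), g x :=
          (lintegral_image_eq_lintegral_abs_deriv_mul' measurableSet_Iio hderiv hinj g).symm
      _ ≤ ∫⁻ x : ℝ, g x := setLIntegral_le_lintegral _ _
      _ = ENNReal.ofReal I := hg_int
  -- combine
  have hsplit : (∫⁻ ξ : ℝ, F ξ)
      = (∫⁻ ξ in Icc (-1:ℝ) 1, F ξ) + (∫⁻ ξ in (Icc (-1:ℝ) 1)ᶜ, F ξ) :=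
    (lintegral_add_compl F measurableSet_Icc).symm
  have hcompl : (∫⁻ ξ in (Icc (-1:ℝ) 1)ᶜ, F ξ)
      = (∫⁻ ξ in Iio (-1:ℝ), F ξ) + (∫⁻ ξ in Ioi (1:ℝ), F ξ) := by
    have hcIcc : (Icc (-1:ℝ) 1)ᶜ = Iio (-1) ∪ Ioi 1 := by
      ext x
      rw [mem_compl_iff, mem_Icc, not_and_or, not_le, not_le, mem_union, mem_Iio, mem_Ioi]
    rw [hcIcc]
    exact lintegral_union measurableSet_Ioi
      (by
        apply Set.disjoint_left.mpr
        intro x hx hx'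
        exact absurd (lt_trans (mem_Iio.mp hx) (by norm_num)) (not_lt.mpr (mem_Ioi.mp hx').le))
  calc (∫⁻ ξ : ℝ, F ξ)
      = (∫⁻ ξ in Icc (-1:ℝ) 1, F ξ)
        + ((∫⁻ ξ in Iio (-1:ℝ), F ξ) + (∫⁻ ξ in Ioi (1:ℝ), F ξ)) := by rw [hsplit, hcompl]
    _ ≤ ENNReal.ofReal 2 + (ENNReal.ofReal I + ENNReal.ofReal I) :=
        add_le_add hmid (add_le_add hleft hright)
    _ = ENNReal.ofReal (2 + 2 * I) := by
        rw [← ENNReal.ofReal_add hInn hInn, ← ENNReal.ofReal_add (by norm_num) (by linarith)]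
        ring_nf
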